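/- There is a family { G_α : α < 𝔠 } of clopen subgroups of the topological group H(ω*) (with the compact-open topology) such that: (1) the family of pairs (G_α, H(ω*) \ G_α) is independent, i.e. for every finite set σ ⊆ 𝔠 and every function ξ : σ → {0,1}, the set ⋂_{α ∈ σ} A_α^{ξ(α)} is infinite, where A_α^0 = G_α and A_α^1 = H(ω*) \ G_α; and (2) for every infinite subset σ ⊆ 𝔠, the intersection ⋂_{α ∈ σ} G_α is nowhere dense in H(ω*). -/

import Mathlib

open Set Topology TopologicalSpace

/-- The compact-open topology on the group of self-homeomorphisms of a space:
the topology induced from the compact-open topology on `C(X, X)`. -/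
instance homeomorphCompactOpen (X : Type*) [TopologicalSpace X] :
    TopologicalSpace (X ≃ₜ X) :=
  TopologicalSpace.induced (fun h : X ≃ₜ X => (h : C(X, X))) ContinuousMap.compactOpen

/-- The group of self-homeomorphisms of a space, under composition. -/
instance homeomorphGroup (X : Type*) [TopologicalSpace X] : Group (X ≃ₜ X) where
  mul f g := g.trans f
  one := Homeomorph.refl X
  inv := Homeomorph.symm
  mul_assoc _ _ _ := Homeomorph.ext fun _ => rfl
  one_mul _ := Homeomorph.ext fun _ => rfl
  mul_one _ := Homeomorph.ext fun _ => rfl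
  inv_mul_cancel f := Homeomorph.ext fun x => f.symm_apply_apply x

/-- The weight of a topological space: the least cardinality of a base of its topology. -/
noncomputable def TopologicalSpace.weight (X : Type u) [TopologicalSpace X] : Cardinal.{u} :=
  ⨅ B : {B : Set (Set X) // TopologicalSpace.IsTopologicalBasis B}, Cardinal.mk B.1

/-- A set is an Fσ-set if it is a countable union of closed sets. -/
def IsFsigma {X : Type*} [TopologicalSpace X] (s : Set X) : Prop :=
  ∃ F : ℕ → Set X, (∀ n, IsClosed (F n)) ∧ s = ⋃ n, F n

/-- An F-space (for normal spaces): disjoint open Fσ-sets have disjoint closures. -/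
def IsFSpace (X : Type*) [TopologicalSpace X] : Prop :=
  ∀ U V : Set X, IsOpen U → IsOpen V → IsFsigma U → IsFsigma V → Disjoint U V →
    Disjoint (closure U) (closure V)

/-- A Parovičenko space: a compact zero-dimensional F-space of weight `𝔠` in which
every nonempty Gδ-set has infinite interior. -/
structure IsParovicenko (X : Type u) [TopologicalSpace X] : Prop where
  compact : CompactSpace X
  t2 : T2Space X
  zeroDim : TopologicalSpace.IsTopologicalBasis {s : Set X | IsClopen s}
  fSpace : IsFSpace X
  weight_eq : TopologicalSpace.weight X = Cardinal.continuum
  gdelta_int : ∀ s : Set X, IsGδ s → s.Nonempty → (interior s).Infinite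

/-- The Gδ-modification of a topology: the topology generated by the Gδ-sets. -/
def gdeltaMod {X : Type*} (t : TopologicalSpace X) : TopologicalSpace X :=
  TopologicalSpace.generateFrom {s : Set X | @IsGδ X t s}

/-- The Čech–Stone remainder `βα \ α` of a space `α`. -/
abbrev CechStoneRemainder (α : Type u) [TopologicalSpace α] : Type u :=
  {p : StoneCech α // p ∉ Set.range (stoneCechUnit : α → StoneCech α)}

/-- `ω* = βω \ ω`, the Čech–Stone remainder of the countable discrete space `ω`. -/
abbrev OmegaStar : Type := CechStoneRemainder ℕ



noncomputable section
open Classical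

abbrev βN := StoneCech ℕ

def chi (A : Set ℕ) : βN → Bool :=
  stoneCechExtend (continuous_of_discreteTopology (f := fun n => decide (n ∈ A)))

lemma chi_cont (A : Set ℕ) : Continuous (chi A) := continuous_stoneCechExtend _

lemma chi_unit (A : Set ℕ) (n : ℕ) : chi A (stoneCechUnit n) = decide (n ∈ A) :=
  congrFun (stoneCechExtend_extends _) n

lemma bool_ext {f g : βN → Bool} (hf : Continuous f) (hg : Continuous g)
    (h : ∀ n, f (stoneCechUnit n) = g (stoneCechUnit n)) : f = g :=
  stoneCech_hom_ext hf hg (funext h)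

/-- The clopen subset of `βℕ` determined by `A ⊆ ℕ`. -/
def bset (A : Set ℕ) : Set βN := chi A ⁻¹' {true}

lemma isClopen_bset (A : Set ℕ) : IsClopen (bset A) :=
  (isClopen_discrete _).preimage (chi_cont A)

lemma unit_mem_bset {A : Set ℕ} {n : ℕ} : stoneCechUnit n ∈ bset A ↔ n ∈ A := by
  simp [bset, chi_unit]

lemma chi_compl (A : Set ℕ) : chi Aᶜ = fun p => !(chi A p) := by
  have hc : Continuous (fun p => !(chi A p)) :=
    Continuous.comp (continuous_of_discreteTopology (α := Bool) (f := fun b => !b)) (chi_cont A)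
  apply bool_ext (chi_cont _) hc
  intro n
  by_cases h : n ∈ A <;> simp [chi_unit, h]

lemma bset_compl (A : Set ℕ) : bset Aᶜ = (bset A)ᶜ := by
  ext p
  simp [bset, chi_compl]

lemma chi_inter (A B : Set ℕ) : chi (A ∩ B) = fun p => (chi A p && chi B p) := by
  have hc : Continuous (fun p => (chi A p && chi B p)) :=
    (continuous_of_discreteTopology (α := Bool × Bool)
      (f := fun p => p.1 && p.2)).comp ((chi_cont A).prodMk (chi_cont B))
  apply bool_ext (chi_cont _) hc
  intro n
  by_cases h : n ∈ A <;> by_cases h' : n ∈ B <;> simp [chi_unit, h, h']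

lemma bset_inter (A B : Set ℕ) : bset (A ∩ B) = bset A ∩ bset B := by
  ext p
  simp [bset, chi_inter]

lemma bset_union (A B : Set ℕ) : bset (A ∪ B) = bset A ∪ bset B := by
  have : A ∪ B = (Aᶜ ∩ Bᶜ)ᶜ := by simp [compl_inter]
  rw [this, bset_compl, bset_inter, bset_compl, bset_compl]
  simp [compl_inter]

lemma bset_univ : bset (univ : Set ℕ) = univ := by
  have : chi (univ : Set ℕ) = fun _ => true := by
    apply bool_ext (chi_cont _) continuous_const
    intro n; simp [chi_unit]
  ext p; simp [bset, this]

lemma bset_mono {A B : Set ℕ} (h : A ⊆ B) : bset A ⊆ bset B := by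
  have : bset A = bset A ∩ bset B := by rw [← bset_inter, inter_eq_self_of_subset_left h]
  rw [this]; exact inter_subset_right

lemma closure_unit_image (A : Set ℕ) : closure (stoneCechUnit '' A) = bset A := by
  apply subset_antisymm
  · exact closure_minimal (by rintro _ ⟨n, hn, rfl⟩; exact unit_mem_bset.2 hn)
      (isClopen_bset A).isClosed
  · intro p hp
    have hdense : closure (stoneCechUnit '' A) ∪ closure (stoneCechUnit '' Aᶜ) = univ := by
      rw [← closure_union, ← image_union, union_compl_self]
      have := denseRange_stoneCechUnit (α := ℕ)
      simpa [image_univ] using this.closure_range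
    rcases (eq_univ_iff_forall.1 hdense p).imp id id with h | h
    · exact h
    · exfalso
      have : p ∈ bset Aᶜ := closure_minimal
        (by rintro _ ⟨n, hn, rfl⟩; exact unit_mem_bset.2 hn) (isClopen_bset Aᶜ).isClosed h
      rw [bset_compl] at this
      exact this hp

lemma unit_injective : Function.Injective (stoneCechUnit : ℕ → βN) := by
  intro m n h
  have h1 := chi_unit {m} m
  rw [h, chi_unit] at h1
  simp only [decide_eq_decide] at h1
  simpa [eq_comm] using h1.2 rfl

lemma bset_singleton (n : ℕ) : bset {n} = {stoneCechUnit n} := by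
  rw [← closure_unit_image]
  simp

lemma isOpen_range_unit : IsOpen (Set.range (stoneCechUnit : ℕ → βN)) := by
  have : Set.range (stoneCechUnit : ℕ → βN) = ⋃ n, bset {n} := by
    ext p
    simp [bset_singleton, eq_comm]
  rw [this]
  exact isOpen_iUnion fun n => (isClopen_bset _).isOpen
namespace OmegaP

lemma isClosed_omegaStar :
    IsClosed {p : βN | p ∉ Set.range (stoneCechUnit : ℕ → βN)} :=
  isOpen_range_unit.isClosed_compl

instance : CompactSpace OmegaStar :=
  isCompact_iff_compactSpace.1 isClosed_omegaStar.isCompact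

/-- The basic clopen subset of `ω*` determined by `A ⊆ ℕ`. -/
def K (A : Set ℕ) : Set OmegaStar := Subtype.val ⁻¹' (bset A)

lemma mem_K {A : Set ℕ} {p : OmegaStar} : p ∈ K A ↔ p.1 ∈ bset A := Iff.rfl

lemma isClopen_K (A : Set ℕ) : IsClopen (K A) :=
  (isClopen_bset A).preimage continuous_subtype_val

lemma K_compl (A : Set ℕ) : K Aᶜ = (K A)ᶜ := by
  simp [K, bset_compl]

lemma K_inter (A B : Set ℕ) : K (A ∩ B) = K A ∩ K B := by
  simp [K, bset_inter, preimage_inter]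

lemma K_union (A B : Set ℕ) : K (A ∪ B) = K A ∪ K B := by
  simp [K, bset_union, preimage_union]

lemma K_univ : K (univ : Set ℕ) = univ := by simp [K, bset_univ]

lemma K_mono {A B : Set ℕ} (h : A ⊆ B) : K A ⊆ K B :=
  preimage_mono (bset_mono h)

lemma isCompact_K (A : Set ℕ) : IsCompact (K A) :=
  (isClopen_K A).isClosed.isCompact

lemma K_eq_empty_of_finite {A : Set ℕ} (h : A.Finite) : K A = ∅ := by
  have : bset A ⊆ Set.range (stoneCechUnit : ℕ → βN) := by
    rw [← closure_unit_image]
    have : closure (stoneCechUnit '' A) = stoneCechUnit '' A :=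
      IsClosed.closure_eq (h.image _).isClosed
    rw [this]
    exact image_subset_range _ _
  ext p
  simp only [mem_K, mem_empty_iff_false, iff_false]
  intro hp
  exact p.2 (this hp)

lemma K_nonempty_of_infinite {A : Set ℕ} (h : A.Infinite) : (K A).Nonempty := by
  by_contra hne
  rw [not_nonempty_iff_eq_empty] at hne
  have hsub : bset A ⊆ Set.range (stoneCechUnit : ℕ → βN) := by
    intro q hq
    by_contra hq2
    have : (⟨q, hq2⟩ : OmegaStar) ∈ K A := hq
    simp [hne] at this
  have hcover : bset A ⊆ ⋃ n : ℕ, bset {n} := by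
    intro q hq
    rcases hsub hq with ⟨n, rfl⟩
    exact mem_iUnion.2 ⟨n, unit_mem_bset.2 rfl⟩
  obtain ⟨t, ht⟩ := (isClopen_bset A).isClosed.isCompact.elim_finite_subcover
    (fun n : ℕ => bset {n}) (fun n => (isClopen_bset _).isOpen) hcover
  have : A ⊆ ↑t := by
    intro n hn
    have : stoneCechUnit n ∈ ⋃ m ∈ t, bset {m} := ht (unit_mem_bset.2 hn)
    rcases mem_iUnion₂.1 this with ⟨m, hm, hmem⟩
    rw [bset_singleton] at hmem
    have := unit_injective hmem
    rwa [this]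
  exact h (Set.Finite.subset t.finite_toSet this)

lemma K_eq_empty_iff {A : Set ℕ} : K A = ∅ ↔ A.Finite := by
  constructor
  · intro h
    by_contra hinf
    rcases K_nonempty_of_infinite hinf with ⟨p, hp⟩
    simp [h] at hp
  · exact K_eq_empty_of_finite

lemma K_congr {A B : Set ℕ} (hAB : (A \ B).Finite) (hBA : (B \ A).Finite) : K A = K B := by
  have h1 : K A ⊆ K B := by
    have : A ⊆ (A \ B) ∪ B := by
      intro x hx
      by_cases h : x ∈ B
      · exact Or.inr h
      · exact Or.inl ⟨hx, h⟩
    refine (K_mono this).trans ?_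
    rw [K_union, K_eq_empty_of_finite hAB]
    simp
  have h2 : K B ⊆ K A := by
    have : B ⊆ (B \ A) ∪ A := by
      intro x hx
      by_cases h : x ∈ A
      · exact Or.inr h
      · exact Or.inl ⟨hx, h⟩
    refine (K_mono this).trans ?_
    rw [K_union, K_eq_empty_of_finite hBA]
    simp
  exact subset_antisymm h1 h2

lemma K_ne_of_infinite_diff {A B : Set ℕ} (h : (B \ A).Infinite) : K A ≠ K B := by
  intro he
  rcases K_nonempty_of_infinite h with ⟨p, hp⟩
  have h1 : p ∈ K B := K_mono diff_subset hp
  have h2 : p ∈ K Aᶜ := K_mono (by intro x hx; exact hx.2) hp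
  rw [K_compl] at h2
  rw [← he] at h1
  exact h2 h1

lemma K_disjoint_of_disjoint {A B : Set ℕ} (h : A ∩ B = ∅) : K A ∩ K B = ∅ := by
  rw [← K_inter, h]
  exact K_eq_empty_of_finite (finite_empty)

end OmegaP
namespace OmegaP

/-- Distinct points of `βℕ` are separated by basic clopen sets. -/
lemma bset_separates {p q : βN} (h : p ≠ q) : ∃ D : Set ℕ, p ∈ bset D ∧ q ∈ bset Dᶜ := by
  obtain ⟨U, V, hU, hV, hpU, hqV, hUV⟩ := t2_separation h
  have hpd : p ∈ closure (Set.range (stoneCechUnit : ℕ → βN)) :=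
    (denseRange_stoneCechUnit (α := ℕ)).closure_range ▸ mem_univ p
  have hqd : q ∈ closure (Set.range (stoneCechUnit : ℕ → βN)) :=
    (denseRange_stoneCechUnit (α := ℕ)).closure_range ▸ mem_univ q
  refine ⟨{n | stoneCechUnit n ∈ U}, ?_, ?_⟩
  · rw [← closure_unit_image, mem_closure_iff]
    intro W hW hpW
    rcases mem_closure_iff.1 hpd (W ∩ U) (hW.inter hU) ⟨hpW, hpU⟩
      with ⟨x, ⟨hxW, hxU⟩, n, rfl⟩
    exact ⟨stoneCechUnit n, hxW, n, hxU, rfl⟩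
  · rw [← closure_unit_image, mem_closure_iff]
    intro W hW hqW
    rcases mem_closure_iff.1 hqd (W ∩ V) (hW.inter hV) ⟨hqW, hqV⟩
      with ⟨x, ⟨hxW, hxV⟩, n, rfl⟩
    refine ⟨stoneCechUnit n, hxW, n, ?_, rfl⟩
    intro hnU
    exact (disjoint_left.1 hUV hnU) hxV

lemma bset_biInter {ι : Type*} (t : Finset ι) (D : ι → Set ℕ) :
    bset (⋂ i ∈ t, D i) = ⋂ i ∈ t, bset (D i) := by
  classical
  induction t using Finset.induction_on with
  | empty => simp [bset_univ]
  | insert _ _ hni ih =>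
      rename_i a s
      simp only [Finset.mem_insert, iInter_iInter_eq_or_left]
      rw [← ih, ← bset_inter]

/-- Basic clopen sets form a basis of `βℕ`. -/
lemma exists_bset_subset {V : Set βN} (hV : IsOpen V) {p : βN} (hp : p ∈ V) :
    ∃ D : Set ℕ, p ∈ bset D ∧ bset D ⊆ V := by
  classical
  have hcpt : IsCompact Vᶜ := hV.isClosed_compl.isCompact
  have hsep : ∀ q : (Vᶜ : Set βN), ∃ D : Set ℕ, p ∈ bset D ∧ q.1 ∈ bset Dᶜ := by
    intro q
    exact bset_separates (fun he => q.2 (he ▸ hp))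
  choose D hD1 hD2 using hsep
  have hcover : Vᶜ ⊆ ⋃ q : (Vᶜ : Set βN), (bset (D q))ᶜ := by
    intro x hx
    refine mem_iUnion.2 ⟨⟨x, hx⟩, ?_⟩
    have := hD2 ⟨x, hx⟩
    rw [bset_compl] at this
    exact this
  obtain ⟨t, ht⟩ := hcpt.elim_finite_subcover _
    (fun q => (isClopen_bset (D q)).compl.isOpen) hcover
  refine ⟨⋂ q ∈ t, D q, ?_, ?_⟩
  · rw [bset_biInter]
    exact mem_iInter₂.2 fun q _ => hD1 q
  · rw [bset_biInter]
    intro x hx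
    by_contra hxV
    rcases mem_iUnion₂.1 (ht hxV) with ⟨q, hq, hmem⟩
    exact hmem (mem_iInter₂.1 hx q hq)

/-- Basic clopen sets form a basis of `ω*`. -/
lemma exists_K_subset {U : Set OmegaStar} (hU : IsOpen U) {p : OmegaStar} (hp : p ∈ U) :
    ∃ D : Set ℕ, p ∈ K D ∧ K D ⊆ U := by
  rcases isOpen_induced_iff.1 hU with ⟨V, hV, rfl⟩
  rcases exists_bset_subset hV hp with ⟨D, h1, h2⟩
  exact ⟨D, h1, fun x hx => h2 hx⟩

lemma K_biUnion {ι : Type*} (t : Finset ι) (D : ι → Set ℕ) :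
    K (⋃ i ∈ t, D i) = ⋃ i ∈ t, K (D i) := by
  classical
  induction t using Finset.induction_on with
  | empty => simp [K_eq_empty_of_finite finite_empty]
  | insert _ _ hni ih =>
      rename_i a s
      simp only [Finset.mem_insert, iUnion_iUnion_eq_or_left]
      rw [← ih, ← K_union]

/-- Clopen interpolation: between a compact set and an open superset in `ω*`
there is a basic clopen set. -/
lemma exists_K_between {C U : Set OmegaStar} (hC : IsCompact C) (hU : IsOpen U)
    (hCU : C ⊆ U) : ∃ D : Set ℕ, C ⊆ K D ∧ K D ⊆ U := by
  classical
  have hx : ∀ x : C, ∃ D : Set ℕ, x.1 ∈ K D ∧ K D ⊆ U :=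
    fun x => exists_K_subset hU (hCU x.2)
  choose D hD1 hD2 using hx
  have hcover : C ⊆ ⋃ x : C, K (D x) :=
    fun x hxC => mem_iUnion.2 ⟨⟨x, hxC⟩, hD1 ⟨x, hxC⟩⟩
  obtain ⟨t, ht⟩ := hC.elim_finite_subcover _ (fun x => (isClopen_K (D x)).isOpen) hcover
  refine ⟨⋃ x ∈ t, D x, ?_, ?_⟩
  · rw [K_biUnion]; exact ht
  · rw [K_biUnion]
    exact iUnion₂_subset fun x _ => hD2 x

end OmegaP
namespace OmegaP

/-- The extension of a permutation of `ℕ` to `βℕ`. -/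
def bPerm (π : Equiv.Perm ℕ) : βN → βN :=
  stoneCechExtend (continuous_of_discreteTopology (f := fun n => stoneCechUnit (π n)))

lemma bPerm_cont (π : Equiv.Perm ℕ) : Continuous (bPerm π) := continuous_stoneCechExtend _

lemma bPerm_unit (π : Equiv.Perm ℕ) (n : ℕ) : bPerm π (stoneCechUnit n) = stoneCechUnit (π n) :=
  congrFun (stoneCechExtend_extends _) n

lemma bPerm_inv_comp (π : Equiv.Perm ℕ) : ∀ p, bPerm π (bPerm π.symm p) = p := by
  have : bPerm π ∘ bPerm π.symm = id := by
    apply stoneCech_hom_ext ((bPerm_cont π).comp (bPerm_cont π.symm)) continuous_id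
    funext n
    simp [Function.comp, bPerm_unit]
  intro p
  exact congrFun this p

/-- The homeomorphism of `βℕ` induced by a permutation of `ℕ`. -/
def bHomeo (π : Equiv.Perm ℕ) : βN ≃ₜ βN where
  toFun := bPerm π
  invFun := bPerm π.symm
  left_inv := by
    intro p
    have := bPerm_inv_comp π.symm
    simpa using this p
  right_inv := bPerm_inv_comp π
  continuous_toFun := bPerm_cont π
  continuous_invFun := bPerm_cont π.symm

lemma bPerm_remainder (π : Equiv.Perm ℕ) {p : βN}
    (hp : p ∉ Set.range (stoneCechUnit : ℕ → βN)) :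
    bPerm π p ∉ Set.range (stoneCechUnit : ℕ → βN) := by
  rintro ⟨n, hn⟩
  apply hp
  refine ⟨π.symm n, ?_⟩
  have : bPerm π.symm (bPerm π p) = p := (bHomeo π).left_inv p
  rw [← hn, bPerm_unit] at this
  exact this

/-- The homeomorphism of `ω*` induced by a permutation of `ℕ`. -/
def Φ (π : Equiv.Perm ℕ) : OmegaStar ≃ₜ OmegaStar where
  toFun p := ⟨bPerm π p.1, bPerm_remainder π p.2⟩
  invFun p := ⟨bPerm π.symm p.1, bPerm_remainder π.symm p.2⟩
  left_inv p := Subtype.ext ((bHomeo π).left_inv p.1)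
  right_inv p := Subtype.ext ((bHomeo π).right_inv p.1)
  continuous_toFun := Continuous.subtype_mk ((bPerm_cont π).comp continuous_subtype_val) _
  continuous_invFun := Continuous.subtype_mk ((bPerm_cont π.symm).comp continuous_subtype_val) _

lemma chi_bPerm (π : Equiv.Perm ℕ) (A : Set ℕ) :
    ∀ p, chi (π '' A) (bPerm π p) = chi A p := by
  have : chi (π '' A) ∘ bPerm π = chi A := by
    apply stoneCech_hom_ext ((chi_cont _).comp (bPerm_cont π)) (chi_cont A)
    funext n
    simp only [Function.comp, bPerm_unit, chi_unit]
    by_cases h : n ∈ A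
    · simp [h, Set.mem_image_of_mem]
    · have : π n ∉ π '' A := by
        rintro ⟨m, hm, he⟩
        exact h (π.injective he ▸ hm)
      simp [h, this]
  intro p
  exact congrFun this p

lemma Φ_image_K (π : Equiv.Perm ℕ) (A : Set ℕ) : (Φ π) '' K A = K (π '' A) := by
  ext p
  constructor
  · rintro ⟨q, hq, rfl⟩
    show chi (π '' A) (bPerm π q.1) = true
    rw [chi_bPerm]
    exact hq
  · intro hp
    refine ⟨(Φ π).symm p, ?_, (Φ π).apply_symm_apply p⟩
    show chi A (bPerm π.symm p.1) = true
    rw [← chi_bPerm π A (bPerm π.symm p.1), bPerm_inv_comp π p.1]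
    exact hp

lemma perm_image_of_mem_iff {π : Equiv.Perm ℕ} {A : Set ℕ}
    (h : ∀ x, π x ∈ A ↔ x ∈ A) : π '' A = A := by
  ext y
  constructor
  · rintro ⟨x, hx, rfl⟩
    exact (h x).2 hx
  · intro hy
    exact ⟨π.symm y, by rw [← h (π.symm y)]; simpa using hy, by simp⟩

end OmegaP
namespace OmegaP

variable {F : Type*}

/-- Core construction: a permutation of `ℕ` permuting the fibers of `c` according to `φ`. -/
lemma exists_perm (c : ℕ → F) (φ : Equiv.Perm F)
    (h : ∀ f, φ f = f ∨ ({x | c x = f}.Infinite ∧ {x | c x = φ f}.Infinite)) :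
    ∃ π : Equiv.Perm ℕ, ∀ x, c (π x) = φ (c x) := by
  have he : ∀ f : F, Nonempty ({x // c x = f} ≃ {x // c x = φ f}) := by
    intro f
    rcases h f with hf | ⟨h1, h2⟩
    · exact ⟨Equiv.subtypeEquivRight (fun x => by rw [hf])⟩
    · haveI i1 : Infinite {x // c x = f} := h1.to_subtype
      haveI i2 : Infinite {x // c x = φ f} := h2.to_subtype
      exact ⟨(nonempty_equiv_of_countable).some⟩
  let e : ∀ f, {x // c x = f} ≃ {x // c x = φ f} := fun f => (he f).some
  have hcongrS : ∀ (f g : F) (_ : f = g) (a : {z // c z = φ f}) (b : {z // c z = φ g}),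
      a.1 = b.1 → ((e f).symm a).1 = ((e g).symm b).1 := by
    rintro f g rfl a b hab
    rw [Subtype.ext hab]
  have hcongrF : ∀ (f g : F) (_ : f = g) (a : {z // c z = f}) (b : {z // c z = g}),
      a.1 = b.1 → ((e f) a).1 = ((e g) b).1 := by
    rintro f g rfl a b hab
    rw [Subtype.ext hab]
  refine ⟨⟨fun x => (e (c x) ⟨x, rfl⟩).1,
    fun x => ((e (φ.symm (c x))).symm ⟨x, (φ.apply_symm_apply (c x)).symm⟩).1, ?_, ?_⟩,
    fun x => (e (c x) ⟨x, rfl⟩).2⟩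
  · intro x
    set y := e (c x) ⟨x, rfl⟩ with hy
    show ((e (φ.symm (c y.1))).symm ⟨y.1, _⟩).1 = x
    have hfg : φ.symm (c y.1) = c x := by
      rw [y.2]; exact φ.symm_apply_apply _
    rw [hcongrS _ _ hfg ⟨y.1, _⟩ ⟨y.1, y.2⟩ rfl]
    have : (⟨y.1, y.2⟩ : {z // c z = φ (c x)}) = y := Subtype.ext rfl
    rw [this, hy, Equiv.symm_apply_apply]
  · intro x
    set z := (e (φ.symm (c x))).symm ⟨x, (φ.apply_symm_apply (c x)).symm⟩ with hz
    show ((e (c z.1)) ⟨z.1, rfl⟩).1 = x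
    rw [hcongrF _ _ z.2 ⟨z.1, rfl⟩ z rfl]
    exact congrArg Subtype.val
      ((e (φ.symm (c x))).apply_symm_apply ⟨x, (φ.apply_symm_apply (c x)).symm⟩)

lemma perm_symm_prop {c : ℕ → F} {φ : Equiv.Perm F} {π : Equiv.Perm ℕ}
    (hπ : ∀ x, c (π x) = φ (c x)) : ∀ x, c (π.symm x) = φ.symm (c x) := by
  intro x
  have := hπ (π.symm x)
  rw [π.apply_symm_apply] at this
  rw [this]
  simp

lemma perm_image_fiber {c : ℕ → F} {φ : Equiv.Perm F} {π : Equiv.Perm ℕ}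
    (hπ : ∀ x, c (π x) = φ (c x)) (f : F) :
    π '' {x | c x = f} = {x | c x = φ f} := by
  ext y
  rw [Set.mem_image_equiv]
  show c (π.symm y) = f ↔ c y = φ f
  rw [perm_symm_prop hπ y, Equiv.symm_apply_eq]

end OmegaP
namespace OmegaP

/-- An independent family of sets: every finite Boolean combination is infinite. -/
def IndepFamily {T ι : Type*} (A : ι → Set T) : Prop :=
  ∀ (σ : Finset ι) (v : ι → Bool), {x : T | ∀ α ∈ σ, (x ∈ A α ↔ v α = true)}.Infinite

/-- The base type for the classical Fichtenholz–Kantorovich construction. -/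
abbrev FKType : Type := Finset ℚ × Finset (Finset ℚ)

/-- The Fichtenholz–Kantorovich independent family indexed by `ℝ`. -/
def FK (r : ℝ) : Set FKType := {t | Finset.filter (fun q : ℚ => ((q : ℝ) < r)) t.1 ∈ t.2}

lemma indep_FK : IndepFamily FK := by
  intro σ v
  -- a rational strictly between each pair of distinct reals in σ
  set pairSet : Finset ℚ :=
    (σ ×ˢ σ).image (fun p => if h : p.1 < p.2 then Classical.choose (exists_rat_btwn h) else 0)
    with hpairSet
  obtain ⟨M1, hM1⟩ := Finset.exists_le pairSet
  set M : ℚ := M1 + 1 with hM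
  set Fn : ℕ → Finset ℚ := fun n => insert (M + n) pairSet with hFn
  set Sn : ℕ → ℝ → Finset ℚ :=
    fun n r => Finset.filter (fun q : ℚ => ((q : ℝ) < r)) (Fn n) with hSn
  set Gn : ℕ → Finset (Finset ℚ) :=
    fun n => (σ.filter (fun r => v r = true)).image (fun r => Sn n r) with hGn
  have hSne : ∀ n : ℕ, ∀ r ∈ σ, ∀ s ∈ σ, r < s → Sn n r ≠ Sn n s := by
    intro n r hr s hs hrs
    obtain ⟨hq1, hq2⟩ := Classical.choose_spec (exists_rat_btwn hrs)
    set q : ℚ := Classical.choose (exists_rat_btwn hrs) with hq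
    have hqmem : q ∈ pairSet := by
      rw [hpairSet]
      apply Finset.mem_image.2
      exact ⟨(r, s), Finset.mem_product.2 ⟨hr, hs⟩, dif_pos hrs⟩
    intro he
    have h1 : q ∉ Sn n r := by
      rw [hSn]
      simp only [Finset.mem_filter, not_and]
      intro _
      exact not_lt.2 hq1.le
    have h2 : q ∈ Sn n s := by
      rw [hSn]
      exact Finset.mem_filter.2 ⟨Finset.mem_insert_of_mem hqmem, hq2⟩
    rw [he] at h1
    exact h1 h2
  have hSnee : ∀ n : ℕ, ∀ r ∈ σ, ∀ s ∈ σ, r ≠ s → Sn n r ≠ Sn n s := by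
    intro n r hr s hs hne
    rcases lt_or_gt_of_ne hne with h | h
    · exact hSne n r hr s hs h
    · exact fun he => hSne n s hs r hr h he.symm
  have hmem : ∀ n : ℕ, ∀ r ∈ σ, ((Fn n, Gn n) ∈ FK r ↔ v r = true) := by
    intro n r hr
    show Sn n r ∈ Gn n ↔ v r = true
    constructor
    · intro hin
      rcases Finset.mem_image.1 hin with ⟨s, hsf, hse⟩
      rcases Finset.mem_filter.1 hsf with ⟨hsσ, hsv⟩
      by_cases hrs : r = s
      · rwa [hrs]
      · exact absurd hse.symm (hSnee n r hr s hsσ (fun h => hrs h))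
    · intro hv
      exact Finset.mem_image.2 ⟨r, Finset.mem_filter.2 ⟨hr, hv⟩, rfl⟩
  have hinj : Function.Injective (fun n : ℕ => ((Fn n, Gn n) : FKType)) := by
    intro n m he
    have hF : Fn n = Fn m := congrArg Prod.fst he
    have : (M + n : ℚ) ∈ Fn m := by
      rw [← hF, hFn]; exact Finset.mem_insert_self _ _
    rw [hFn] at this
    rcases Finset.mem_insert.1 this with h | h
    · have : (n : ℚ) = m := by linarith [add_left_cancel h]
      exact_mod_cast this
    · exfalso
      have h1 : (M + n : ℚ) ≤ M1 := hM1 _ h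
      have h2 : (0 : ℚ) ≤ n := Nat.cast_nonneg n
      rw [hM] at h1
      linarith
  apply Set.infinite_of_injective_forall_mem hinj
  intro n
  intro r hr
  exact hmem n r hr

lemma exists_indep : ∃ A : ℝ → Set ℕ, IndepFamily A := by
  haveI : Infinite FKType := Prod.infinite_of_left
  have e : FKType ≃ ℕ := (nonempty_equiv_of_countable).some
  refine ⟨fun r => e '' FK r, ?_⟩
  intro σ v
  have : {x : ℕ | ∀ α ∈ σ, (x ∈ e '' FK α ↔ v α = true)} =
      e '' {t : FKType | ∀ α ∈ σ, (t ∈ FK α ↔ v α = true)} := by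
    ext x
    rw [Set.mem_image_equiv]
    simp only [mem_setOf_eq, Set.mem_image_equiv]
  rw [this]
  exact (indep_FK σ v).image (e.injective.injOn)

end OmegaP
namespace OmegaP

/-- The stabilizer of the clopen set `K A` in the homeomorphism group of `ω*`. -/
def stab (A : Set ℕ) : Subgroup (OmegaStar ≃ₜ OmegaStar) where
  carrier := {h | ⇑h '' K A = K A}
  one_mem' := by
    show ⇑(Homeomorph.refl OmegaStar) '' K A = K A
    simp
  mul_mem' := by
    intro a b ha hb
    show ⇑(b.trans a) '' K A = K A
    have hcomp : ⇑(b.trans a) '' K A = ⇑a '' (⇑b '' K A) := by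
      ext y
      simp only [Set.mem_image, Homeomorph.trans_apply]
      constructor
      · rintro ⟨x, hx, rfl⟩; exact ⟨b x, ⟨x, hx, rfl⟩, rfl⟩
      · rintro ⟨z, ⟨x, hx, rfl⟩, rfl⟩; exact ⟨x, hx, rfl⟩
    rw [hcomp, show ⇑b '' K A = K A from hb, show ⇑a '' K A = K A from ha]
  inv_mem' := by
    intro a ha
    show ⇑a.symm '' K A = K A
    conv_lhs => rw [← (show ⇑a '' K A = K A from ha)]
    rw [← Set.image_comp, Homeomorph.symm_comp_self, Set.image_id]

lemma mem_stab {A : Set ℕ} {h : OmegaStar ≃ₜ OmegaStar} :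
    h ∈ stab A ↔ ⇑h '' K A = K A := Iff.rfl

lemma image_eq_iff_mapsTo {h : OmegaStar ≃ₜ OmegaStar} {A : Set ℕ} :
    ⇑h '' K A = K A ↔
      (MapsTo ⇑h (K A) (K A) ∧ MapsTo ⇑h (K A)ᶜ (K A)ᶜ) := by
  constructor
  · intro he
    constructor
    · intro x hx
      rw [← he]
      exact mem_image_of_mem _ hx
    · intro x hx hmem
      rw [← he] at hmem
      rcases hmem with ⟨y, hy, hxy⟩
      exact hx (h.injective hxy ▸ hy)
  · rintro ⟨h1, h2⟩
    apply subset_antisymm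
    · exact h1.image_subset
    · intro y hy
      by_cases hx : h.symm y ∈ K A
      · exact ⟨h.symm y, hx, h.apply_symm_apply y⟩
      · exact absurd (h.apply_symm_apply y ▸ h2 hx) (fun hc => hc hy)

lemma isClopen_stab (A : Set ℕ) : IsClopen ((stab A : Set (OmegaStar ≃ₜ OmegaStar))) := by
  have hS : IsClopen ({f : C(OmegaStar, OmegaStar) | MapsTo ⇑f (K A) (K A)} ∩
      {f : C(OmegaStar, OmegaStar) | MapsTo ⇑f (K A)ᶜ (K A)ᶜ}) := by
    refine IsClopen.inter ?_ ?_
    · exact ContinuousMap.isClopen_setOf_mapsTo (isCompact_K A) (isClopen_K A)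
    · exact ContinuousMap.isClopen_setOf_mapsTo
        ((isClopen_K A).compl.isClosed.isCompact) (isClopen_K A).compl
  have heq : (stab A : Set (OmegaStar ≃ₜ OmegaStar)) =
      (fun h : OmegaStar ≃ₜ OmegaStar => (h : C(OmegaStar, OmegaStar))) ⁻¹'
      ({f : C(OmegaStar, OmegaStar) | MapsTo ⇑f (K A) (K A)} ∩
        {f : C(OmegaStar, OmegaStar) | MapsTo ⇑f (K A)ᶜ (K A)ᶜ}) := by
    ext h
    show h ∈ stab A ↔ _
    rw [mem_stab, image_eq_iff_mapsTo]
    rfl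
  rw [heq]
  exact hS.preimage continuous_induced_dom

end OmegaP
namespace OmegaP

lemma image_trans (a b : OmegaStar ≃ₜ OmegaStar) (S : Set OmegaStar) :
    ⇑(b.trans a) '' S = ⇑a '' (⇑b '' S) := by
  ext y
  simp only [Set.mem_image, Homeomorph.trans_apply]
  constructor
  · rintro ⟨x, hx, rfl⟩; exact ⟨b x, ⟨x, hx, rfl⟩, rfl⟩
  · rintro ⟨z, ⟨x, hx, rfl⟩, rfl⟩; exact ⟨x, hx, rfl⟩

lemma swap_fst {F G : Type*} [DecidableEq F] [DecidableEq G] (a : F) (b1 b2 : G) (p : F × G) :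
    ((Equiv.swap (a, b1) (a, b2)) p).1 = p.1 := by
  rcases eq_or_ne p (a, b1) with rfl | h1
  · rw [Equiv.swap_apply_left]
  rcases eq_or_ne p (a, b2) with rfl | h2
  · rw [Equiv.swap_apply_right]
  · rw [Equiv.swap_apply_of_ne_of_ne h1 h2]

lemma fiber_disjoint {F : Type*} {c : ℕ → F} {f g : F} (h : f ≠ g) :
    {x | c x = f} ∩ {x | c x = g} = ∅ := by
  ext x
  simp only [mem_inter_iff, mem_setOf_eq, mem_empty_iff_false, iff_false, not_and]
  intro h1 h2
  exact h (h1 ▸ h2 ▸ rfl)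

section IndepStep

/-- The cell map of the finite subfamily indexed by `σ`. -/
def cellMap (A : ℝ → Set ℕ) (σ : Finset ℝ) : ℕ → ({α // α ∈ σ} → Bool) :=
  fun x α => decide (x ∈ A α.1)

lemma cellMap_fiber_infinite {A : ℝ → Set ℕ} (hA : IndepFamily A) (σ : Finset ℝ)
    (w : {α // α ∈ σ} → Bool) : {x | cellMap A σ x = w}.Infinite := by
  apply Set.Infinite.mono ?_ (hA σ (fun i => if h : i ∈ σ then w ⟨i, h⟩ else false))
  intro x hx
  show cellMap A σ x = w
  funext α
  have h1 := hx α.1 α.2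
  rw [dif_pos α.2] at h1
  show decide (x ∈ A α.1) = w α
  cases hw : w α
  · rw [hw] at h1
    simp only [Bool.false_eq_true, iff_false] at h1
    simpa using h1
  · rw [hw] at h1
    simpa using h1.2 rfl

lemma mem_iff_cellMap {A : ℝ → Set ℕ} {σ : Finset ℝ} {x : ℕ} {α : ℝ} (hα : α ∈ σ) :
    x ∈ A α ↔ cellMap A σ x ⟨α, hα⟩ = true := by
  show x ∈ A α ↔ decide (x ∈ A α) = true
  simp

/-- The pattern-flipping involution. -/
def flipPerm (σ : Finset ℝ) (ξ : ℝ → Bool) : Equiv.Perm ({α // α ∈ σ} → Bool) :=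
  Function.Involutive.toPerm (fun w α => xor (ξ α.1) (w α))
    (by intro w; funext α; cases h1 : ξ α.1 <;> cases h2 : w α <;> simp [h1, h2])

lemma flipPerm_symm (σ : Finset ℝ) (ξ : ℝ → Bool) : (flipPerm σ ξ).symm = flipPerm σ ξ :=
  Function.Involutive.toPerm_symm _

lemma flipPerm_apply (σ : Finset ℝ) (ξ : ℝ → Bool) (w : {α // α ∈ σ} → Bool)
    (α : {α // α ∈ σ}) : flipPerm σ ξ w α = xor (ξ α.1) (w α) := rfl

/-- Main lemma for the independence part: an infinite family of homeomorphisms realizing a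
given membership pattern. -/
lemma exists_h_family {A : ℝ → Set ℕ} (hA : IndepFamily A) (σ : Finset ℝ) (ξ : ℝ → Bool) :
    ∃ h : ℕ → OmegaStar ≃ₜ OmegaStar, Function.Injective h ∧
      ∀ n : ℕ, ∀ α ∈ σ, (⇑(h n) '' K (A α) = K (A α) ↔ ξ α = false) := by
  classical
  -- the pattern flip permutation π
  obtain ⟨π, hπ⟩ := exists_perm (cellMap A σ) (flipPerm σ ξ)
    (fun f => Or.inr ⟨cellMap_fiber_infinite hA σ f, cellMap_fiber_infinite hA σ _⟩)
  -- image of A α under π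
  have hπA : ∀ α, α ∈ σ → π '' A α = (if ξ α then (A α)ᶜ else A α) := by
    intro α hα
    have key : ∀ y : ℕ, y ∈ π '' A α ↔ xor (ξ α) (decide (y ∈ A α)) = true := by
      intro y
      rw [Set.mem_image_equiv]
      have h1 : cellMap A σ (π.symm y) = flipPerm σ ξ (cellMap A σ y) := by
        have := perm_symm_prop hπ y
        rwa [flipPerm_symm] at this
      rw [mem_iff_cellMap (A := A) hα, h1]
      rfl
    ext y
    rw [key y]
    cases hξ : ξ α
    · simp only [Bool.false_eq_true, if_false]
      simp
    · simp only [if_pos rfl]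
      simp
  -- the designated cell and its splitting into infinitely many infinite pieces
  set v0 : ({α // α ∈ σ} → Bool) := fun _ => true with hv0
  haveI : Infinite {x // cellMap A σ x = v0} := (cellMap_fiber_infinite hA σ v0).to_subtype
  have eP : {x // cellMap A σ x = v0} ≃ ℕ × ℕ := (nonempty_equiv_of_countable).some
  set idx : ℕ → ℕ := fun x => if h : cellMap A σ x = v0 then (eP ⟨x, h⟩).1 else 0 with hidx
  set c3 : ℕ → (({α // α ∈ σ} → Bool) × ℕ) := fun x => (cellMap A σ x, idx x) with hc3
  have fiber3_inf : ∀ j : ℕ, {x | c3 x = (v0, j)}.Infinite := by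
    intro j
    apply Set.infinite_of_injective_forall_mem
      (f := fun n : ℕ => ((eP.symm (j, n)) : {x // cellMap A σ x = v0}).1)
    · intro n m he
      have h2 : eP.symm (j, n) = eP.symm (j, m) := Subtype.ext he
      have h3 := eP.symm.injective h2
      exact (Prod.mk.injEq _ _ _ _ ▸ h3).2
    · intro n
      show c3 ((eP.symm (j, n)) : {x // cellMap A σ x = v0}).1 = (v0, j)
      have h2 : cellMap A σ ((eP.symm (j, n)) : {x // cellMap A σ x = v0}).1 = v0 :=
        (eP.symm (j, n)).2
      rw [hc3]
      refine Prod.ext h2 ?_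
      show idx _ = j
      rw [hidx]
      simp only [dif_pos h2]
      have h4 : (⟨((eP.symm (j, n)) : {x // cellMap A σ x = v0}).1, h2⟩ :
          {x // cellMap A σ x = v0}) = eP.symm (j, n) := Subtype.ext rfl
      rw [h4, Equiv.apply_symm_apply]
  -- the within-cell permutations τ n
  have hτe : ∀ n : ℕ, ∃ τ : Equiv.Perm ℕ,
      ∀ x, c3 (τ x) = (Equiv.swap (v0, 2*n) (v0, 2*n+1)) (c3 x) := by
    intro n
    apply exists_perm
    intro f
    rcases eq_or_ne f (v0, 2*n) with rfl | h1
    · refine Or.inr ⟨fiber3_inf _, ?_⟩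
      rw [Equiv.swap_apply_left]
      exact fiber3_inf _
    rcases eq_or_ne f (v0, 2*n+1) with rfl | h2
    · refine Or.inr ⟨fiber3_inf _, ?_⟩
      rw [Equiv.swap_apply_right]
      exact fiber3_inf _
    · exact Or.inl (Equiv.swap_apply_of_ne_of_ne h1 h2)
  choose τ hτs using hτe
  -- τ n preserves every cell of the σ-algebra, hence every A α
  have hτc : ∀ n x, cellMap A σ (τ n x) = cellMap A σ x := by
    intro n x
    have h1 := congrArg Prod.fst (hτs n x)
    rw [swap_fst] at h1
    exact h1
  have hτA : ∀ (n : ℕ) (α : ℝ), α ∈ σ → τ n '' A α = A α := by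
    intro n α hα
    apply perm_image_of_mem_iff
    intro x
    rw [mem_iff_cellMap (A := A) hα, mem_iff_cellMap (A := A) hα, hτc n x]
  -- the homeomorphism family
  refine ⟨fun n => (Φ π) * (Φ (τ n)), ?_, ?_⟩
  · -- injectivity
    intro n m he
    by_contra hnm
    have he' : Φ π * Φ (τ n) = Φ π * Φ (τ m) := he
    have hfun : ∀ p, Φ (τ n) p = Φ (τ m) p := by
      intro p
      have h1 : ⇑(Φ π * Φ (τ n)) p = ⇑(Φ π * Φ (τ m)) p := by rw [he']
      have h2 : (Φ π) ((Φ (τ n)) p) = (Φ π) ((Φ (τ m)) p) := h1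
      exact (Φ π).injective h2
    obtain ⟨p, hp⟩ := K_nonempty_of_infinite (fiber3_inf (2*n))
    have hn : Φ (τ n) p ∈ K (τ n '' {x | c3 x = (v0, 2*n)}) := by
      rw [← Φ_image_K]
      exact mem_image_of_mem _ hp
    have hm : Φ (τ m) p ∈ K (τ m '' {x | c3 x = (v0, 2*n)}) := by
      rw [← Φ_image_K]
      exact mem_image_of_mem _ hp
    rw [perm_image_fiber (hτs n), Equiv.swap_apply_left] at hn
    rw [perm_image_fiber (hτs m)] at hm
    have hfix : (Equiv.swap ((v0 : ({α // α ∈ σ} → Bool)), 2*m) (v0, 2*m+1)) (v0, 2*n)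
        = (v0, 2*n) := by
      apply Equiv.swap_apply_of_ne_of_ne
      · intro hcon
        have h2 := (Prod.mk.injEq _ _ _ _ ▸ hcon).2
        omega
      · intro hcon
        have h2 := (Prod.mk.injEq _ _ _ _ ▸ hcon).2
        omega
    rw [hfix] at hm
    rw [hfun p] at hn
    have hdisj : K ({x | c3 x = ((v0 : ({α // α ∈ σ} → Bool)), 2*n+1)}) ∩
        K {x | c3 x = (v0, 2*n)} = ∅ := by
      rw [← K_inter, fiber_disjoint (by
        intro hcon
        have h2 := (Prod.mk.injEq _ _ _ _ ▸ hcon).2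
        omega)]
      exact K_eq_empty_of_finite finite_empty
    have hmem : Φ (τ m) p ∈ K {x | c3 x = (v0, 2*n+1)} ∩ K {x | c3 x = (v0, 2*n)} := ⟨hn, hm⟩
    rw [hdisj] at hmem
    exact hmem
  · -- membership pattern
    intro n α hα
    have himg : ⇑((Φ π) * (Φ (τ n))) '' K (A α) = K (π '' A α) := by
      show ⇑((Φ (τ n)).trans (Φ π)) '' K (A α) = _
      rw [image_trans, Φ_image_K, hτA n α hα, Φ_image_K]
    rw [himg, hπA α hα]
    by_cases hξ : ξ α = true
    · rw [if_pos hξ, hξ, K_compl]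
      simp only [Bool.true_eq_false, iff_false]
      intro hcon
      obtain ⟨p, hp⟩ := K_nonempty_of_infinite
        (Set.Infinite.mono (fun x hx => (hx α (Finset.mem_singleton_self α)).2 rfl)
          (hA {α} (fun _ => true)))
      have hmem : p ∈ (K (A α))ᶜ := by rw [hcon]; exact hp
      exact hmem hp
    · rw [if_neg hξ]
      simp only [Bool.not_eq_true] at hξ
      simp [hξ]

end IndepStep

end OmegaP
namespace OmegaP

/-- Pigeonhole: given infinitely many indices of an independent family, some cell of any
finite algebra is split by one of them. -/
lemma exists_split {A : ℝ → Set ℕ} (hA : IndepFamily A) {σ : Set ℝ} (hσ : σ.Infinite)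
    {F : Type*} [Finite F] (d : ℕ → F) :
    ∃ α ∈ σ, ∃ v : F, ({x | d x = v} ∩ A α).Infinite ∧ ({x | d x = v} \ A α).Infinite := by
  classical
  by_contra hcon
  push_neg at hcon
  haveI := hσ.to_subtype
  set m : σ → (F → Bool) := fun α v => decide (({x | d x = v} ∩ A α.1).Infinite) with hm
  obtain ⟨a, b, hab, hmeq⟩ := Finite.exists_ne_map_eq_of_infinite m
  have hab1 : a.1 ≠ b.1 := fun he => hab (Subtype.ext he)
  have hfin : (A a.1 \ A b.1).Finite := by
    have hsub : A a.1 \ A b.1 ⊆ ⋃ v : F, ({x | d x = v} ∩ A a.1 ∩ (A b.1)ᶜ) := by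
      intro x hx
      exact mem_iUnion.2 ⟨d x, ⟨⟨rfl, hx.1⟩, hx.2⟩⟩
    refine Set.Finite.subset (Set.finite_iUnion ?_) hsub
    intro v
    by_cases hb : ({x | d x = v} ∩ A b.1).Infinite
    · have h2 : ¬({x | d x = v} \ A b.1).Infinite :=
        fun h => h (hcon b.1 b.2 v hb)
      rw [Set.not_infinite] at h2
      exact h2.subset (fun x hx => ⟨hx.1.1, hx.2⟩)
    · have hma : ¬({x | d x = v} ∩ A a.1).Infinite := by
        intro hinf
        apply hb
        have h3 : m a v = true := by
          rw [hm]
          simpa using hinf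
        have h4 : m b v = true := by rw [← hmeq]; exact h3
        rw [hm] at h4
        simpa using h4
      rw [Set.not_infinite] at hma
      exact hma.subset (fun x hx => ⟨hx.1.1, hx.1.2⟩)
  have hindep := hA {a.1, b.1} (fun i => decide (i = a.1))
  have hsub2 : {x : ℕ | ∀ β ∈ ({a.1, b.1} : Finset ℝ), (x ∈ A β ↔ decide (β = a.1) = true)}
      ⊆ A a.1 \ A b.1 := by
    intro x hx
    have h1 := hx a.1 (Finset.mem_insert_self _ _)
    have h2 := hx b.1 (Finset.mem_insert_of_mem (Finset.mem_singleton_self _))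
    simp only [decide_eq_true_eq] at h1 h2
    refine ⟨h1.2 (by simp), fun hxb => hab1 (h2.1 hxb).symm⟩
  exact (hindep.mono hsub2) hfin

/-- The key density lemma: any finite intersection of `stab`s of an infinite subfamily of an
independent family is nowhere dense. -/
lemma inter_nowhereDense {A : ℝ → Set ℕ} (hA : IndepFamily A) {σ : Set ℝ} (hσ : σ.Infinite) :
    IsNowhereDense (⋂ α ∈ σ, (stab (A α) : Set (OmegaStar ≃ₜ OmegaStar))) := by
  classical
  set N := ⋂ α ∈ σ, (stab (A α) : Set (OmegaStar ≃ₜ OmegaStar)) with hN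
  have hNclosed : IsClosed N :=
    isClosed_biInter (fun α hα => (isClopen_stab (A α)).isClosed)
  show interior (closure N) = ∅
  rw [hNclosed.closure_eq]
  rw [eq_empty_iff_forall_notMem]
  intro h hh
  have hhN : h ∈ N := interior_subset hh
  -- unpack the compact-open neighborhood
  obtain ⟨O, hO, hpre⟩ := isOpen_induced_iff.1 (isOpen_interior (s := N))
  have hhO : (h : C(OmegaStar, OmegaStar)) ∈ O := by
    rw [← hpre] at hh
    exact hh
  have hbasis := TopologicalSpace.isTopologicalBasis_of_subbasis
    (ContinuousMap.compactOpen_eq (X := OmegaStar) (Y := OmegaStar))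
  obtain ⟨W, hWmem, hhW, hWO⟩ := hbasis.exists_subset_of_mem_open hhO hO
  obtain ⟨fam, ⟨hfamfin, hfamsub⟩, rfl⟩ := hWmem
  haveI : Finite ↥fam := hfamfin.to_subtype
  -- unpack each subbasic constraint and interpolate a basic clopen set
  have hunpack : ∀ s : ↥fam, ∃ D : Set ℕ, ∃ Ks : Set OmegaStar, ∃ Us : Set OmegaStar,
      s.1 = {f : C(OmegaStar, OmegaStar) | MapsTo ⇑f Ks Us} ∧
      Ks ⊆ K D ∧ (K D ⊆ ⇑h ⁻¹' Us) := by
    rintro ⟨s, hs⟩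
    rcases hfamsub hs with ⟨Ks, hKs, Us, hUs, heq⟩
    have hhs : MapsTo ⇑h Ks Us := by
      have : (h : C(OmegaStar, OmegaStar)) ∈ s := mem_sInter.1 hhW s hs
      rw [← heq] at this
      exact this
    have hKU : Ks ⊆ ⇑h ⁻¹' Us := fun x hx => hhs hx
    obtain ⟨D, hD1, hD2⟩ := exists_K_between hKs (hUs.preimage h.continuous) hKU
    exact ⟨D, Ks, Us, heq.symm, hD1, hD2⟩
  choose D Ks Us hseq hD1 hD2 using hunpack
  -- find a split cell
  set d : ℕ → (↥fam → Bool) := fun x s => decide (x ∈ D s) with hd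
  obtain ⟨α, hα, v, hS1, hS2⟩ := exists_split hA hσ d
  -- the swap permutation
  set c4 : ℕ → ((↥fam → Bool) × Bool) := fun x => (d x, decide (x ∈ A α)) with hc4
  have hfib1 : {x | c4 x = (v, true)} = {x | d x = v} ∩ A α := by
    ext x
    simp only [hc4, mem_setOf_eq, Prod.mk.injEq, mem_inter_iff, decide_eq_true_eq]
  have hfib2 : {x | c4 x = (v, false)} = {x | d x = v} \ A α := by
    ext x
    simp only [hc4, mem_setOf_eq, Prod.mk.injEq, mem_diff, decide_eq_false_iff_not]
  obtain ⟨τ, hτ⟩ := exists_perm c4 (Equiv.swap (v, true) (v, false)) (by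
    intro f
    rcases eq_or_ne f (v, true) with rfl | h1
    · refine Or.inr ⟨?_, ?_⟩
      · rw [hfib1]; exact hS1
      · rw [Equiv.swap_apply_left, hfib2]; exact hS2
    rcases eq_or_ne f (v, false) with rfl | h2
    · refine Or.inr ⟨?_, ?_⟩
      · rw [hfib2]; exact hS2
      · rw [Equiv.swap_apply_right, hfib1]; exact hS1
    · exact Or.inl (Equiv.swap_apply_of_ne_of_ne h1 h2))
  -- τ preserves each D s
  have hτd : ∀ x, d (τ x) = d x := by
    intro x
    have h1 := congrArg Prod.fst (hτ x)
    rwa [swap_fst] at h1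
  have hτD : ∀ s : ↥fam, ⇑(Φ τ) '' K (D s) = K (D s) := by
    intro s
    rw [Φ_image_K]
    have hmem : ∀ x, τ x ∈ D s ↔ x ∈ D s := by
      intro x
      have h2 := congrFun (hτd x) s
      simp only [hd] at h2
      rwa [decide_eq_decide] at h2
    rw [perm_image_of_mem_iff hmem]
  set g : OmegaStar ≃ₜ OmegaStar := h * Φ τ with hg
  have hgW : (g : C(OmegaStar, OmegaStar)) ∈ ⋂₀ fam := by
    rw [mem_sInter]
    intro s hs
    rw [show s = (⟨s, hs⟩ : ↥fam).1 from rfl, hseq ⟨s, hs⟩]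
    show MapsTo ⇑g (Ks ⟨s, hs⟩) (Us ⟨s, hs⟩)
    intro x hx
    have hx1 : x ∈ K (D ⟨s, hs⟩) := hD1 _ hx
    have hx2 : Φ τ x ∈ K (D ⟨s, hs⟩) := by
      rw [← hτD ⟨s, hs⟩]
      exact mem_image_of_mem _ hx1
    have hx3 := hD2 ⟨s, hs⟩ hx2
    show g x ∈ Us ⟨s, hs⟩
    have hgx : g x = h (Φ τ x) := rfl
    rw [hgx]
    exact hx3
  have hgN : g ∈ N := by
    have hmem : g ∈ interior N := by
      rw [← hpre]
      exact hWO hgW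
    exact interior_subset hmem
  have hgstab : ⇑g '' K (A α) = K (A α) := mem_iInter₂.1 hgN α hα
  have hhstab : ⇑h '' K (A α) = K (A α) := mem_iInter₂.1 hhN α hα
  have himg : ⇑g '' K (A α) = ⇑h '' K (τ '' A α) := by
    show ⇑((Φ τ).trans h) '' K (A α) = _
    rw [image_trans, Φ_image_K]
  have hKeq : K (τ '' A α) = K (A α) := by
    apply h.injective.image_injective
    rw [← himg, hgstab, hhstab]
  have hdiff : (τ '' A α \ A α).Infinite := by
    apply Set.Infinite.mono ?_ hS2
    intro x hx
    have hxf : c4 x = (v, false) := by rw [← hfib2] at hx; exact hx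
    constructor
    · rw [Set.mem_image_equiv]
      have h5 : c4 (τ.symm x) =
          (Equiv.swap ((v : ↥fam → Bool), (true : Bool)) (v, false)).symm (c4 x) :=
        perm_symm_prop hτ x
      rw [Equiv.symm_swap, hxf, Equiv.swap_apply_right] at h5
      have h6 : (decide (τ.symm x ∈ A α) : Bool) = true := congrArg Prod.snd h5
      simpa using h6
    · intro hxA
      have h6 : (decide (x ∈ A α) : Bool) = false := congrArg Prod.snd hxf
      simp only [decide_eq_false_iff_not] at h6
      exact h6 hxA
  exact K_ne_of_infinite_diff hdiff hKeq.symm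

end OmegaP
/-- There is a family of `𝔠` many clopen subgroups of `H(ω*)` such that
the corresponding family of pairs (subgroup, complement) is independent, and the
intersection of any infinitely many of the subgroups is nowhere dense in `H(ω*)`. -/
theorem exists_independent_clopen_subgroups :
    ∃ (ι : Type) (_ : Cardinal.mk ι = Cardinal.continuum)
      (G : ι → Subgroup (OmegaStar ≃ₜ OmegaStar)),
      (∀ α : ι, IsClopen (G α : Set (OmegaStar ≃ₜ OmegaStar))) ∧
      (∀ (σ : Finset ι) (ξ : ι → Bool),
        (⋂ α ∈ σ, if ξ α then (G α : Set (OmegaStar ≃ₜ OmegaStar))ᶜ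
          else (G α : Set (OmegaStar ≃ₜ OmegaStar))).Infinite) ∧
      (∀ σ : Set ι, σ.Infinite →
        IsNowhereDense (⋂ α ∈ σ, (G α : Set (OmegaStar ≃ₜ OmegaStar)))) := by
  obtain ⟨A, hA⟩ := OmegaP.exists_indep
  refine ⟨ℝ, Cardinal.mk_real, fun α => OmegaP.stab (A α), ?_, ?_, ?_⟩
  · exact fun α => OmegaP.isClopen_stab (A α)
  · intro σ ξ
    obtain ⟨h, hinj, hmem⟩ := OmegaP.exists_h_family hA σ ξ
    apply Set.infinite_of_injective_forall_mem hinj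
    intro n
    rw [Set.mem_iInter₂]
    intro α hα
    by_cases hξ : ξ α = true
    · rw [if_pos hξ]
      intro hcon
      have h2 : ⇑(h n) '' OmegaP.K (A α) = OmegaP.K (A α) := hcon
      have h3 := (hmem n α hα).1 h2
      rw [hξ] at h3
      exact absurd h3 (by simp)
    · rw [if_neg hξ]
      show ⇑(h n) '' OmegaP.K (A α) = OmegaP.K (A α)
      exact (hmem n α hα).2 (by simpa using hξ)
  · intro σ hσ
    exact OmegaP.inter_nowhereDense hA hσ
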